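/- arXiv:2504.02385 — 3 statements merged into one kernel-verified Lean document; each statement's English description precedes it below -/
import Mathlib

section
/- Suppose αⱼ ≤ C·αʲ/2 for all j in (2ℕ)≥p, where α > 0, C > 1, p ≥ 1. Then for all even j ≥ 2m and all ℓ ≥ 1, ( Σ_{j₁+⋯+j_ℓ = j, each jᵢ even and ≥ p} Π_{κ=1}^{ℓ} 2α_{j_κ+1}/(j_κ+1)² )^{1/(j+ℓ)} ≤ 2 C^{1/(p+1)} α, where α_{j_κ+1} denotes the value of the sequence at index j_κ+1 (assumed also bounded by C·α^{j_κ+1}/2). -/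
open Finset

lemma sum_antidiagonalTuple_succ {M : Type*} [AddCommMonoid M] (k n : ℕ)
    (F : (Fin (k + 1) → ℕ) → M) :
    ∑ t ∈ Finset.Nat.antidiagonalTuple (k + 1) n, F t
      = ∑ p ∈ Finset.HasAntidiagonal.antidiagonal n,
          ∑ s ∈ Finset.Nat.antidiagonalTuple k p.2, F (Fin.cons p.1 s) := by
  rw [Finset.sum_sigma']
  refine (Finset.sum_nbij'
    (fun (t : Fin (k+1) → ℕ) => (⟨(t 0, ∑ i : Fin k, t i.succ), Fin.tail t⟩ : Σ _ : ℕ × ℕ, (Fin k → ℕ)))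
    (fun x => Fin.cons x.1.1 x.2) ?_ ?_ ?_ ?_ ?_)
  · intro t ht
    rw [Finset.Nat.mem_antidiagonalTuple] at ht
    simp only [Finset.mem_sigma, Finset.HasAntidiagonal.mem_antidiagonal,
      Finset.Nat.mem_antidiagonalTuple]
    constructor
    · rw [← ht, Fin.sum_univ_succ]
    · rfl
  · intro x hx
    simp only [Finset.mem_sigma, Finset.HasAntidiagonal.mem_antidiagonal,
      Finset.Nat.mem_antidiagonalTuple] at hx
    rw [Finset.Nat.mem_antidiagonalTuple, Fin.sum_cons, hx.2, hx.1]
  · intro t _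
    exact Fin.cons_self_tail t
  · intro x hx
    simp only [Finset.mem_sigma, Finset.HasAntidiagonal.mem_antidiagonal,
      Finset.Nat.mem_antidiagonalTuple] at hx
    refine Sigma.ext ?_ ?_
    · simp only [Fin.cons_zero, Fin.cons_succ]
      rw [hx.2]
    · simp [Fin.tail_cons]
  · intro t _
    rw [Fin.cons_self_tail]

lemma aux_sum_bound (g : ℕ → ℝ) (β : ℝ) (hβ : 0 < β) (hg0 : ∀ n, 0 ≤ g n)
    (hg : ∀ n, g n ≤ β ^ (n + 1)) :
    ∀ ℓ j : ℕ, (∑ t ∈ Finset.Nat.antidiagonalTuple ℓ j, ∏ κ, g (t κ))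
      ≤ (2 * β) ^ (j + ℓ) := by
  intro ℓ
  induction ℓ with
  | zero =>
    intro j
    cases j with
    | zero => simp
    | succ n =>
      rw [Finset.Nat.antidiagonalTuple_zero_succ]
      simp only [Finset.sum_empty]
      positivity
  | succ k ih =>
    intro j
    rw [sum_antidiagonalTuple_succ]
    have hstep : ∀ p ∈ Finset.HasAntidiagonal.antidiagonal j,
        (∑ s ∈ Finset.Nat.antidiagonalTuple k p.2, ∏ κ, g ((Fin.cons (α := fun _ => ℕ) p.1 s) κ))
          ≤ (2 * β) ^ (j + (k + 1)) * (1 / 2 : ℝ) ^ (p.1 + 1) := by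
      intro p hp
      rw [Finset.HasAntidiagonal.mem_antidiagonal] at hp
      have h1 : (∑ s ∈ Finset.Nat.antidiagonalTuple k p.2, ∏ κ, g ((Fin.cons (α := fun _ => ℕ) p.1 s) κ))
          = g p.1 * (∑ s ∈ Finset.Nat.antidiagonalTuple k p.2, ∏ κ, g (s κ)) := by
        rw [Finset.mul_sum]
        refine Finset.sum_congr rfl fun s _ => ?_
        rw [Fin.prod_univ_succ]
        simp
      rw [h1]
      have h2 : g p.1 * (∑ s ∈ Finset.Nat.antidiagonalTuple k p.2, ∏ κ, g (s κ))
          ≤ β ^ (p.1 + 1) * (2 * β) ^ (p.2 + k) := by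
        refine mul_le_mul (hg p.1) (ih p.2) ?_ (by positivity)
        exact Finset.sum_nonneg fun s _ => Finset.prod_nonneg fun κ _ => hg0 _
      refine h2.trans_eq ?_
      have e2 : (2 * β) ^ (j + (k + 1)) * (1 / 2 : ℝ) ^ (p.1 + 1)
          = ((2 * β) ^ (p.1 + 1) * (1 / 2 : ℝ) ^ (p.1 + 1)) * (2 * β) ^ (p.2 + k) := by
        rw [show j + (k + 1) = (p.1 + 1) + (p.2 + k) from by omega, pow_add]
        ring
      rw [e2, ← mul_pow]
      have e3 : (2 * β) * (1 / 2 : ℝ) = β := by ring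
      rw [e3]
    calc ∑ p ∈ Finset.HasAntidiagonal.antidiagonal j,
          ∑ s ∈ Finset.Nat.antidiagonalTuple k p.2, ∏ κ, g ((Fin.cons (α := fun _ => ℕ) p.1 s) κ)
        ≤ ∑ p ∈ Finset.HasAntidiagonal.antidiagonal j,
            (2 * β) ^ (j + (k + 1)) * (1 / 2 : ℝ) ^ (p.1 + 1) :=
          Finset.sum_le_sum hstep
      _ = (2 * β) ^ (j + (k + 1)) *
            ∑ p ∈ Finset.HasAntidiagonal.antidiagonal j, (1 / 2 : ℝ) ^ (p.1 + 1) := by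
          rw [Finset.mul_sum]
      _ ≤ (2 * β) ^ (j + (k + 1)) * 1 := by
          refine mul_le_mul_of_nonneg_left ?_ (by positivity)
          rw [Finset.Nat.sum_antidiagonal_eq_sum_range_succ_mk]
          have : ∑ i ∈ Finset.range (j + 1), (1 / 2 : ℝ) ^ (i + 1)
              = (1 / 2) * ∑ i ∈ Finset.range (j + 1), (1 / 2 : ℝ) ^ i := by
            rw [Finset.mul_sum]
            exact Finset.sum_congr rfl fun i _ => by ring
          rw [this]
          have h2 := sum_geometric_two_le (j + 1)
          linarith
      _ = (2 * β) ^ (j + (k + 1)) := mul_one _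

/-- The combinatorial bound behind `λ_comm ≤ 2 C^{1/(p+1)} α` (Remark 5 of the paper).
If the nonnegative sequence `a` satisfies `a_j ≤ C αʲ/2` for all `j ≥ p` (covering the
even indices `≥ p` as well as the shifted indices `j_κ + 1`), `α > 0`, `C > 1`, `p ≥ 1`,
then for every even `j ≥ 2m` and every `ℓ ≥ 1`,
`( Σ_{j₁+⋯+j_ℓ = j, each jᵢ even and ≥ p} Π_κ 2 a_{j_κ+1}/(j_κ+1)² )^{1/(j+ℓ)}
  ≤ 2 C^{1/(p+1)} α`. -/
theorem stmt9 (a : ℕ → ℝ) (C α : ℝ) (p m : ℕ)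
    (hα : 0 < α) (hC : 1 < C) (hp : 1 ≤ p)
    (ha0 : ∀ j, 0 ≤ a j) (ha : ∀ j, p ≤ j → a j ≤ C * α ^ j / 2) :
    ∀ j ℓ : ℕ, Even j → 2 * m ≤ j → 1 ≤ ℓ →
      (∑ t ∈ (Finset.Nat.antidiagonalTuple ℓ j).filter
            (fun t => ∀ κ, Even (t κ) ∧ p ≤ t κ),
          ∏ κ, 2 * a (t κ + 1) / ((t κ : ℝ) + 1) ^ 2) ^
          ((1 : ℝ) / ((j : ℝ) + (ℓ : ℝ))) ≤
        2 * C ^ ((1 : ℝ) / ((p : ℝ) + 1)) * α := by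
  intro j ℓ _ _ hℓ
  have hC0 : (0 : ℝ) < C := lt_trans one_pos hC
  set β : ℝ := C ^ ((1 : ℝ) / ((p : ℝ) + 1)) * α with hβdef
  have hβ : 0 < β := mul_pos (Real.rpow_pos_of_pos hC0 _) hα
  -- the auxiliary function
  set g : ℕ → ℝ := fun n =>
    if Even n ∧ p ≤ n then 2 * a (n + 1) / ((n : ℝ) + 1) ^ 2 else 0 with hgdef
  have hg0 : ∀ n, 0 ≤ g n := by
    intro n
    simp only [hgdef]
    split_ifs with h
    · have := ha0 (n + 1)
      positivity
    · exact le_refl 0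
  have hg : ∀ n, g n ≤ β ^ (n + 1) := by
    intro n
    simp only [hgdef]
    split_ifs with h
    · have hpn : p ≤ n := h.2
      have hpn1 : p ≤ n + 1 := le_trans hpn (Nat.le_succ n)
      have hA : a (n + 1) ≤ C * α ^ (n + 1) / 2 := ha (n + 1) hpn1
      have hden : (1 : ℝ) ≤ ((n : ℝ) + 1) ^ 2 := by
        have : (0 : ℝ) ≤ (n : ℝ) := Nat.cast_nonneg n
        nlinarith
      have h1 : 2 * a (n + 1) / ((n : ℝ) + 1) ^ 2 ≤ 2 * a (n + 1) := by
        refine div_le_self ?_ hden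
        have := ha0 (n + 1); positivity
      have h2 : 2 * a (n + 1) ≤ C * α ^ (n + 1) := by linarith
      have h3 : C * α ^ (n + 1) ≤ β ^ (n + 1) := by
        rw [hβdef, mul_pow]
        refine mul_le_mul_of_nonneg_right ?_ (by positivity)
        have hrw : (C ^ ((1 : ℝ) / ((p : ℝ) + 1))) ^ (n + 1)
            = C ^ (((n : ℝ) + 1) * ((1 : ℝ) / ((p : ℝ) + 1))) := by
          rw [← Real.rpow_natCast (C ^ ((1 : ℝ) / ((p : ℝ) + 1))) (n + 1),
            ← Real.rpow_mul (le_of_lt hC0)]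
          push_cast
          ring_nf
        rw [hrw]
        have hexp : (1 : ℝ) ≤ ((n : ℝ) + 1) * ((1 : ℝ) / ((p : ℝ) + 1)) := by
          rw [mul_one_div, le_div_iff₀ (by positivity)]
          have : (p : ℝ) ≤ (n : ℝ) := by exact_mod_cast hpn
          linarith
        calc C = C ^ (1 : ℝ) := (Real.rpow_one C).symm
          _ ≤ C ^ (((n : ℝ) + 1) * ((1 : ℝ) / ((p : ℝ) + 1))) :=
            Real.rpow_le_rpow_of_exponent_le (le_of_lt hC) hexp
      linarith
    · positivity
  -- rewrite the filtered sum
  have key : (∑ t ∈ (Finset.Nat.antidiagonalTuple ℓ j).filter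
        (fun t => ∀ κ, Even (t κ) ∧ p ≤ t κ),
      ∏ κ, 2 * a (t κ + 1) / ((t κ : ℝ) + 1) ^ 2)
      = ∑ t ∈ Finset.Nat.antidiagonalTuple ℓ j, ∏ κ, g (t κ) := by
    rw [Finset.sum_filter]
    refine Finset.sum_congr rfl fun t _ => ?_
    split_ifs with h
    · refine Finset.prod_congr rfl fun κ _ => ?_
      simp only [hgdef]
      rw [if_pos (h κ)]
    · push_neg at h
      obtain ⟨κ, hκ⟩ := h
      refine (Finset.prod_eq_zero (Finset.mem_univ κ) ?_).symm
      simp only [hgdef]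
      rw [if_neg]
      intro hcon
      exact Nat.not_le.mpr (hκ hcon.1) hcon.2
  have hbound := aux_sum_bound g β hβ hg0 hg ℓ j
  rw [key]
  have hS0 : (0 : ℝ) ≤ ∑ t ∈ Finset.Nat.antidiagonalTuple ℓ j, ∏ κ, g (t κ) :=
    Finset.sum_nonneg fun t _ => Finset.prod_nonneg fun κ _ => hg0 _
  have hjl : (0 : ℕ) < j + ℓ := by omega
  have hcast : (j : ℝ) + (ℓ : ℝ) = ((j + ℓ : ℕ) : ℝ) := by push_cast; ring
  have hrpow : ((2 * β) ^ (j + ℓ) : ℝ) ^ ((1 : ℝ) / ((j : ℝ) + (ℓ : ℝ))) = 2 * β := by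
    rw [hcast, ← Real.rpow_natCast (2 * β) (j + ℓ), ← Real.rpow_mul (by positivity)]
    rw [mul_one_div, div_self (by exact_mod_cast hjl.ne'), Real.rpow_one]
  calc (∑ t ∈ Finset.Nat.antidiagonalTuple ℓ j, ∏ κ, g (t κ)) ^
        ((1 : ℝ) / ((j : ℝ) + (ℓ : ℝ)))
      ≤ ((2 * β) ^ (j + ℓ) : ℝ) ^ ((1 : ℝ) / ((j : ℝ) + (ℓ : ℝ))) := by
        refine Real.rpow_le_rpow hS0 hbound ?_
        positivity
    _ = 2 * β := hrpow
    _ = 2 * C ^ ((1 : ℝ) / ((p : ℝ) + 1)) * α := by rw [hβdef]; ring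
end

section
/- Let H = Σ_{j=1}^L λ_j P_j where the P_j are unitary and Hermitian and the λ_j are nonzero. Suppose U = (V₁⊗I) c₀-P₁ (V₂⊗I) c₀-P₂ ⋯ (V_L⊗I) c₀-P_L (V_{L+1}⊗I) where V₁,…,V_{L+1} are unitaries on m ancilla qubits and c₀-P_j = |0^m⟩⟨0^m| ⊗ (P_j − I) + I ⊗ I. If (⟨0^m| ⊗ I) U (|0^m⟩ ⊗ I) = H holds for all choices of unitaries P₁,…,P_L (with the same coefficients λ_j), then 2^m ≥ L, i.e., m ≥ log₂ L. -/
open Matrix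
open scoped Kronecker

/-- The all-zeros basis state index of the `m`-qubit ancilla register. -/
def anc0 (m : ℕ) : Fin (2 ^ m) := ⟨0, pow_pos (by norm_num) m⟩

/-- The rank-one projector `|0^m⟩⟨0^m|` on the ancilla register. -/
noncomputable def e00 (m : ℕ) : Matrix (Fin (2 ^ m)) (Fin (2 ^ m)) ℂ :=
  Matrix.single (anc0 m) (anc0 m) 1

/-- The zero-controlled unitary `c₀-P = |0^m⟩⟨0^m| ⊗ (P − I) + I ⊗ I`. -/
noncomputable def ctrl0 (m : ℕ) {N : ℕ} (P : Matrix (Fin N) (Fin N) ℂ) :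
    Matrix (Fin (2 ^ m) × Fin N) (Fin (2 ^ m) × Fin N) ℂ :=
  e00 m ⊗ₖ (P - 1) + 1

/-- The circuit `U = (V₁⊗I) c₀-P₁ (V₂⊗I) c₀-P₂ ⋯ (V_L⊗I) c₀-P_L (V_{L+1}⊗I)`. -/
noncomputable def circuit (m : ℕ) {N L : ℕ}
    (V : Fin (L + 1) → Matrix (Fin (2 ^ m)) (Fin (2 ^ m)) ℂ)
    (P : Fin L → Matrix (Fin N) (Fin N) ℂ) :
    Matrix (Fin (2 ^ m) × Fin N) (Fin (2 ^ m) × Fin N) ℂ :=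
  (List.ofFn (fun j : Fin L =>
      (V j.castSucc ⊗ₖ (1 : Matrix (Fin N) (Fin N) ℂ)) * ctrl0 m (P j))).prod *
    (V (Fin.last L) ⊗ₖ (1 : Matrix (Fin N) (Fin N) ℂ))

/-- The compression `(⟨0^m| ⊗ I) U (|0^m⟩ ⊗ I)` of a circuit on ancilla ⊗ system. -/
noncomputable def compress (m : ℕ) {N : ℕ}
    (U : Matrix (Fin (2 ^ m) × Fin N) (Fin (2 ^ m) × Fin N) ℂ) :
    Matrix (Fin N) (Fin N) ℂ :=
  Matrix.of fun i j => U (anc0 m, i) (anc0 m, j)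

/-! ### Auxiliary machinery -/

section aux
variable {n : Type*} [Fintype n] [DecidableEq n]

/-- Ordered product `f 0 * f 1 * ⋯ * f (b-1)`. -/
noncomputable def pr (f : ℕ → Matrix n n ℂ) : ℕ → Matrix n n ℂ
  | 0 => 1
  | (k+1) => pr f k * f k

lemma pr_zero (f : ℕ → Matrix n n ℂ) : pr f 0 = 1 := rfl
lemma pr_succ (f : ℕ → Matrix n n ℂ) (k : ℕ) : pr f (k+1) = pr f k * f k := rfl

lemma pr_congr (f g : ℕ → Matrix n n ℂ) (b : ℕ) (h : ∀ k < b, f k = g k) :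
    pr f b = pr g b := by
  induction b with
  | zero => rfl
  | succ b ih =>
      rw [pr_succ, pr_succ, ih (fun k hk => h k (hk.trans (Nat.lt_succ_self b))),
        h b (Nat.lt_succ_self b)]

lemma pr_add (f : ℕ → Matrix n n ℂ) (a b : ℕ) :
    pr f (a + b) = pr f a * pr (fun k => f (a + k)) b := by
  induction b with
  | zero => simp [pr_zero]
  | succ b ih => rw [← Nat.add_assoc, pr_succ, ih, pr_succ, Matrix.mul_assoc]

lemma pr_unitary (f : ℕ → Matrix n n ℂ) (b : ℕ)
    (h : ∀ k < b, f k ∈ Matrix.unitaryGroup n ℂ) :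
    pr f b ∈ Matrix.unitaryGroup n ℂ := by
  induction b with
  | zero => exact one_mem _
  | succ b ih =>
      exact mul_mem (ih (fun k hk => h k (hk.trans (Nat.lt_succ_self b))))
        (h b (Nat.lt_succ_self b))

lemma ofFn_prod_eq_pr (L : ℕ) (f : Fin L → Matrix n n ℂ) (g : ℕ → Matrix n n ℂ)
    (h : ∀ j : Fin L, g j = f j) : (List.ofFn f).prod = pr g L := by
  induction L with
  | zero => simp [pr_zero]
  | succ L ih =>
      rw [List.ofFn_succ', List.prod_concat, pr_succ,
        ih (fun j => f j.castSucc) (fun j => by simpa using h j.castSucc)]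
      congr 1
      simpa using (h (Fin.last L)).symm

lemma prod_kron {N : ℕ} (l : List (Matrix n n ℂ)) :
    (l.map (fun A => A ⊗ₖ (1 : Matrix (Fin N) (Fin N) ℂ))).prod
      = l.prod ⊗ₖ (1 : Matrix (Fin N) (Fin N) ℂ) := by
  induction l with
  | nil => simp [Matrix.one_kronecker_one]
  | cons A l ih => simp [ih, ← Matrix.mul_kronecker_mul]

end aux

lemma sandwich {m : ℕ} (X Y : Matrix (Fin (2^m)) (Fin (2^m)) ℂ) (i j : Fin (2^m)) :
    (X * e00 m * Y) i j = X i (anc0 m) * Y (anc0 m) j := by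
  rw [Matrix.mul_assoc, Matrix.mul_apply]
  rw [Finset.sum_eq_single (anc0 m)]
  · rw [e00, Matrix.single_mul_apply_same, one_mul]
  · intro k _ hk
    simp [e00, hk]
  · intro h; exact absurd (Finset.mem_univ _) h

/-- Diagonal ancilla matrix `(t-1)•|0⟩⟨0| + 1`. -/
noncomputable def Dm (m : ℕ) (t : ℂ) : Matrix (Fin (2 ^ m)) (Fin (2 ^ m)) ℂ :=
  (t - 1) • e00 m + 1

lemma Dm_one (m : ℕ) : Dm m 1 = 1 := by simp [Dm]

lemma DmL {m : ℕ} (t : ℂ) (X Y : Matrix (Fin (2 ^ m)) (Fin (2 ^ m)) ℂ) (i j : Fin (2 ^ m)) :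
    (X * Dm m t * Y) i j = (X * Y) i j + (t - 1) * (X i (anc0 m) * Y (anc0 m) j) := by
  have h : X * Dm m t * Y = (t - 1) • (X * e00 m * Y) + X * Y := by
    rw [Dm, Matrix.mul_add, Matrix.mul_one, Matrix.add_mul, Matrix.mul_smul, Matrix.smul_mul]
  rw [h, Matrix.add_apply, Matrix.smul_apply, sandwich, smul_eq_mul, add_comm]

lemma trip {m : ℕ} (s : ℂ) (X Y : Matrix (Fin (2 ^ m)) (Fin (2 ^ m)) ℂ) :
    (X * Dm m s * Y) (anc0 m) (anc0 m)
      = (X * Y) (anc0 m) (anc0 m)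
        + (s - 1) * (X (anc0 m) (anc0 m) * Y (anc0 m) (anc0 m)) := DmL s X Y _ _

lemma quint {m : ℕ} (s t : ℂ) (X M Y : Matrix (Fin (2 ^ m)) (Fin (2 ^ m)) ℂ) :
    (X * Dm m s * M * Dm m t * Y) (anc0 m) (anc0 m)
      = (X * (M * Y)) (anc0 m) (anc0 m)
        + (s - 1) * (X (anc0 m) (anc0 m) * (M * Y) (anc0 m) (anc0 m))
        + (t - 1) * (((X * M) (anc0 m) (anc0 m)
            + (s - 1) * (X (anc0 m) (anc0 m) * M (anc0 m) (anc0 m)))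
          * Y (anc0 m) (anc0 m)) := by
  rw [DmL, Matrix.mul_assoc (X * Dm m s) M Y, DmL, DmL]

lemma eval_one {m : ℕ} (W : ℕ → Matrix (Fin (2 ^ m)) (Fin (2 ^ m)) ℂ) (c d : ℕ) (s : ℂ) :
    pr (fun k => W k * Dm m (if k = c then s else 1)) (c + 1 + d) * W (c + 1 + d)
      = pr W (c + 1) * Dm m s * pr (fun k => W (c + 1 + k)) (d + 1) := by
  have h1 : pr (fun k => W k * Dm m (if k = c then s else 1)) (c + 1)
      = pr W c * (W c * Dm m s) := by
    rw [pr_succ, if_pos rfl]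
    congr 1
    exact pr_congr _ _ c (fun k hk => by
      rw [if_neg (Nat.ne_of_lt hk), Dm_one, Matrix.mul_one])
  have h2 : pr (fun k => (fun k => W k * Dm m (if k = c then s else 1)) (c + 1 + k)) d
      = pr (fun k => W (c + 1 + k)) d := by
    exact pr_congr _ _ d (fun k hk => by
      simp only []
      rw [if_neg (by omega), Dm_one, Matrix.mul_one])
  rw [pr_add, h1, h2, pr_succ W c, pr_succ (fun k => W (c + 1 + k)) d]
  simp only [Matrix.mul_assoc]

lemma eval_two {m : ℕ} (W : ℕ → Matrix (Fin (2 ^ m)) (Fin (2 ^ m)) ℂ) (c e d : ℕ) (s t : ℂ) :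
    pr (fun k => W k * Dm m (if k = c then s else if k = c + 1 + e then t else 1))
        ((c + 1) + ((e + 1) + d)) * W ((c + 1) + ((e + 1) + d))
      = pr W (c + 1) * Dm m s * pr (fun k => W (c + 1 + k)) (e + 1) * Dm m t *
          pr (fun k => W (c + 1 + (e + 1 + k))) (d + 1) := by
  have h1 : pr (fun k => W k * Dm m (if k = c then s else if k = c + 1 + e then t else 1)) (c + 1)
      = pr W c * (W c * Dm m s) := by
    rw [pr_succ, if_pos rfl]
    congr 1
    exact pr_congr _ _ c (fun k hk => by
      rw [if_neg (Nat.ne_of_lt hk), if_neg (by omega), Dm_one, Matrix.mul_one])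
  have h2 : pr (fun k =>
        (fun k => W k * Dm m (if k = c then s else if k = c + 1 + e then t else 1)) (c + 1 + k))
        (e + 1)
      = pr (fun k => W (c + 1 + k)) e * (W (c + 1 + e) * Dm m t) := by
    rw [pr_succ]
    congr 1
    · exact pr_congr _ _ e (fun k hk => by
        simp only []
        rw [if_neg (by omega), if_neg (by omega), Dm_one, Matrix.mul_one])
    · simp only []
      rw [if_neg (by omega : ¬ c + 1 + e = c)]
      simp
  have h3 : pr (fun k =>
        (fun k => W k * Dm m (if k = c then s else if k = c + 1 + e then t else 1))
          (c + 1 + (e + 1 + k))) d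
      = pr (fun k => W (c + 1 + (e + 1 + k))) d := by
    exact pr_congr _ _ d (fun k hk => by
      simp only []
      rw [if_neg (by omega), if_neg (by omega), Dm_one, Matrix.mul_one])
  rw [pr_add, pr_add _ (e + 1) d, h1]
  have h2' : pr (fun k =>
        (fun k => W k * Dm m (if k = c then s else if k = c + 1 + e then t else 1)) (c + 1 + k))
        (e + 1) * pr (fun k =>
        (fun k => W k * Dm m (if k = c then s else if k = c + 1 + e then t else 1))
          (c + 1 + (e + 1 + k))) d
      = (pr (fun k => W (c + 1 + k)) e * (W (c + 1 + e) * Dm m t)) *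
          pr (fun k => W (c + 1 + (e + 1 + k))) d := by
    rw [h2, h3]
  rw [h2', pr_succ W c, pr_succ (fun k => W (c + 1 + k)) e,
    pr_succ (fun k => W (c + 1 + (e + 1 + k))) d]
  simp only [Matrix.mul_assoc]

lemma ctrl0_scalar (m N : ℕ) (t : ℂ) :
    ctrl0 m ((t : ℂ) • (1 : Matrix (Fin N) (Fin N) ℂ))
      = Dm m t ⊗ₖ (1 : Matrix (Fin N) (Fin N) ℂ) := by
  rw [ctrl0, Dm]
  have h1 : (t • (1 : Matrix (Fin N) (Fin N) ℂ)) - 1 = (t - 1) • 1 := by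
    rw [sub_smul, one_smul]
  rw [h1, Matrix.add_kronecker, Matrix.one_kronecker_one,
    Matrix.kronecker_smul, Matrix.smul_kronecker]

lemma circuit_scalar (m N L : ℕ) (V : Fin (L + 1) → Matrix (Fin (2 ^ m)) (Fin (2 ^ m)) ℂ)
    (ε : Fin L → ℂ) :
    circuit m V (fun j => ε j • (1 : Matrix (Fin N) (Fin N) ℂ))
      = ((List.ofFn fun j : Fin L => V j.castSucc * Dm m (ε j)).prod * V (Fin.last L))
          ⊗ₖ (1 : Matrix (Fin N) (Fin N) ℂ) := by
  rw [circuit]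
  have h1 : (List.ofFn fun j : Fin L =>
        (V j.castSucc ⊗ₖ (1 : Matrix (Fin N) (Fin N) ℂ)) * ctrl0 m (ε j • 1))
      = (List.ofFn fun j : Fin L => V j.castSucc * Dm m (ε j)).map
          (fun A => A ⊗ₖ (1 : Matrix (Fin N) (Fin N) ℂ)) := by
    rw [List.map_ofFn]
    congr 1
    funext j
    simp only [Function.comp]
    rw [ctrl0_scalar, ← Matrix.mul_kronecker_mul, Matrix.one_mul]
  rw [h1, prod_kron, ← Matrix.mul_kronecker_mul, Matrix.one_mul]

lemma compress_kron (m N : ℕ) (A : Matrix (Fin (2 ^ m)) (Fin (2 ^ m)) ℂ) :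
    compress m (A ⊗ₖ (1 : Matrix (Fin N) (Fin N) ℂ)) = A (anc0 m) (anc0 m) • 1 := by
  ext i j
  simp [compress, Matrix.kroneckerMap_apply, Matrix.smul_apply, smul_eq_mul]

/-- Extension of `V` to `ℕ`. -/
noncomputable def Vext {m L : ℕ} (V : Fin (L + 1) → Matrix (Fin (2 ^ m)) (Fin (2 ^ m)) ℂ) :
    ℕ → Matrix (Fin (2 ^ m)) (Fin (2 ^ m)) ℂ :=
  fun k => if h : k < L + 1 then V ⟨k, h⟩ else 1

lemma card_le_of_triangular {d L : ℕ} (u z : Fin L → Fin d → ℂ)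
    (hdiag : ∀ c : Fin L, (∑ i, u c i * z c i) = 1)
    (hoff : ∀ c b : Fin L, (↑c : ℕ) < ↑b → (∑ i, u c i * z b i) = 0) :
    L ≤ d := by
  have hli : LinearIndependent ℂ z := by
    rw [Fintype.linearIndependent_iff]
    intro g hg
    suffices h : ∀ (c : ℕ) (hc : c < L), g ⟨c, hc⟩ = 0 by
      intro j
      have := h ↑j j.isLt
      simpa using this
    intro c
    induction c using Nat.strong_induction_on with
    | _ c ih =>
      intro hc
      have hgi : ∀ i : Fin d, (∑ b : Fin L, g b * z b i) = 0 := by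
        intro i
        have := congrFun hg i
        simpa [Finset.sum_apply, Pi.smul_apply, smul_eq_mul] using this
      have hswap : ∑ b : Fin L, g b * (∑ i, u ⟨c, hc⟩ i * z b i) = 0 := by
        calc ∑ b : Fin L, g b * (∑ i, u ⟨c, hc⟩ i * z b i)
            = ∑ b : Fin L, ∑ i, g b * (u ⟨c, hc⟩ i * z b i) :=
              Finset.sum_congr rfl fun b _ => Finset.mul_sum _ _ _
          _ = ∑ i, ∑ b : Fin L, g b * (u ⟨c, hc⟩ i * z b i) := Finset.sum_comm
          _ = ∑ i, u ⟨c, hc⟩ i * (∑ b : Fin L, g b * z b i) := by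
              refine Finset.sum_congr rfl fun i _ => ?_
              rw [Finset.mul_sum]
              exact Finset.sum_congr rfl fun b _ => by ring
          _ = 0 := Finset.sum_eq_zero fun i _ => by rw [hgi i, mul_zero]
      have hfinal : ∑ b : Fin L, g b * (∑ i, u ⟨c, hc⟩ i * z b i) = g ⟨c, hc⟩ := by
        rw [Finset.sum_eq_single (⟨c, hc⟩ : Fin L)]
        · rw [hdiag, mul_one]
        · intro b _ hbne
          rcases lt_trichotomy (↑b : ℕ) c with h | h | h
          · have hgb : g b = 0 := by
              have := ih ↑b h b.isLt
              simpa using this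
            rw [hgb, zero_mul]
          · exact absurd (Fin.ext h) hbne
          · rw [hoff ⟨c, hc⟩ b h, mul_zero]
        · intro h; exact absurd (Finset.mem_univ _) h
      rw [hswap] at hfinal
      exact hfinal.symm
  have hcard := hli.fintype_card_le_finrank
  simpa [Module.finrank_fintype_fun_eq_card] using hcard

/-- Lower bound on the number of ancilla qubits for block encoding a linear combination
of unitaries: if the circuit `U = (V₁⊗I) c₀-P₁ ⋯ (V_L⊗I) c₀-P_L (V_{L+1}⊗I)` exactly
block-encodes `Σ_j λ_j P_j` (with all `λ_j ≠ 0`) for every choice of unitaries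
`P₁, …, P_L`, then `2^m ≥ L`, i.e. `m ≥ log₂ L`. -/
theorem stmt15 (m N L : ℕ) (hN : 0 < N) (lam : Fin L → ℂ) (hlam : ∀ j, lam j ≠ 0)
    (V : Fin (L + 1) → Matrix (Fin (2 ^ m)) (Fin (2 ^ m)) ℂ)
    (hV : ∀ j, V j ∈ Matrix.unitaryGroup (Fin (2 ^ m)) ℂ)
    (hblock : ∀ P : Fin L → Matrix (Fin N) (Fin N) ℂ,
      (∀ j, P j ∈ Matrix.unitaryGroup (Fin N) ℂ) →
      compress m (circuit m V P) = ∑ j, lam j • P j) :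
    L ≤ 2 ^ m := by
  classical
  set W : ℕ → Matrix (Fin (2 ^ m)) (Fin (2 ^ m)) ℂ := Vext V with hWdef
  have hWV : ∀ (k : ℕ) (h : k < L + 1), W k = V ⟨k, h⟩ := fun k h => dif_pos h
  -- key scalar identity obtained by plugging scalar unitaries into `hblock`
  have key : ∀ ε : ℕ → ℂ, (∀ k, k < L → ε k = 1 ∨ ε k = -1) →
      (pr (fun k => W k * Dm m (ε k)) L * W L) (anc0 m) (anc0 m)
        = ∑ j : Fin L, lam j * ε ↑j := by
    intro ε hε
    have hunit : ∀ j : Fin L,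
        (ε ↑j • (1 : Matrix (Fin N) (Fin N) ℂ)) ∈ Matrix.unitaryGroup (Fin N) ℂ := by
      intro j
      rw [Matrix.mem_unitaryGroup_iff]
      rcases hε ↑j j.isLt with h | h <;> rw [h] <;>
        simp [Matrix.smul_mul, Matrix.mul_smul, smul_smul]
    have hb := hblock (fun j => ε ↑j • 1) hunit
    rw [circuit_scalar, compress_kron] at hb
    have hofn : (List.ofFn fun j : Fin L => V j.castSucc * Dm m (ε ↑j)).prod
        = pr (fun k => W k * Dm m (ε k)) L := by
      apply ofFn_prod_eq_pr
      intro j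
      rw [hWV ↑j (by omega)]
      have hje : (⟨(↑j : ℕ), by omega⟩ : Fin (L + 1)) = j.castSucc := Fin.ext rfl
      rw [hje]
    rw [hofn] at hb
    have hVlast : V (Fin.last L) = W L := (hWV L (Nat.lt_succ_self L)).symm
    rw [hVlast] at hb
    have h2 : (∑ j : Fin L, lam j • (ε ↑j • (1 : Matrix (Fin N) (Fin N) ℂ)))
        = (∑ j : Fin L, lam j * ε ↑j) • 1 := by
      rw [Finset.sum_smul]
      exact Finset.sum_congr rfl fun j _ => by rw [smul_smul]
    rw [h2] at hb
    have h3 := congrArg (fun M : Matrix (Fin N) (Fin N) ℂ => M ⟨0, hN⟩ ⟨0, hN⟩) hb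
    simpa using h3
  -- single-insertion identity
  have hsingle : ∀ (c : ℕ) (hc : c < L) (s : ℂ), s = 1 ∨ s = -1 →
      (pr W (c + 1) * Dm m s * pr (fun k => W (c + 1 + k)) (L - c)) (anc0 m) (anc0 m)
        = ∑ j : Fin L, lam j * (if (↑j : ℕ) = c then s else 1) := by
    intro c hc s hs
    have e1 := eval_one W c (L - c - 1) s
    have hd : c + 1 + (L - c - 1) = L := by omega
    rw [hd] at e1
    have hd2 : L - c - 1 + 1 = L - c := by omega
    rw [hd2] at e1
    have hk := key (fun k => if k = c then s else 1) (fun k _ => by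
      by_cases h : k = c
      · simpa [h] using hs
      · simp [h])
    rw [e1] at hk
    exact hk
  -- first orthogonality consequence
  have hR1 : ∀ (c : ℕ) (hc : c < L),
      (pr W (c + 1)) (anc0 m) (anc0 m) *
        (pr (fun k => W (c + 1 + k)) (L - c)) (anc0 m) (anc0 m) = lam ⟨c, hc⟩ := by
    intro c hc
    have h1 := hsingle c hc 1 (Or.inl rfl)
    have h2 := hsingle c hc (-1) (Or.inr rfl)
    rw [trip] at h1 h2
    have hs1 : (∑ j : Fin L, lam j * (if (↑j : ℕ) = c then (1:ℂ) else 1))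
        = ∑ j : Fin L, lam j :=
      Finset.sum_congr rfl fun j _ => by rw [ite_self, mul_one]
    rw [hs1] at h1
    have hdiff : (∑ j : Fin L, lam j)
        - (∑ j : Fin L, lam j * (if (↑j : ℕ) = c then (-1:ℂ) else 1))
          = 2 * lam ⟨c, hc⟩ := by
      rw [← Finset.sum_sub_distrib, Finset.sum_eq_single (⟨c, hc⟩ : Fin L)]
      · rw [if_pos rfl]; ring
      · intro b _ hb
        have hbc : (↑b : ℕ) ≠ c := fun h => hb (Fin.ext h)
        rw [if_neg hbc]; ring
      · intro h; exact absurd (Finset.mem_univ _) h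
    linear_combination (h1 - h2 + hdiff) / 2
  -- pair identity (double insertion)
  have hpair : ∀ (c b : ℕ), c < b → b < L →
      (pr W (c + 1)) (anc0 m) (anc0 m) *
        (pr (fun k => W (c + 1 + k)) (b - c)) (anc0 m) (anc0 m) *
          (pr (fun k => W (b + 1 + k)) (L - b)) (anc0 m) (anc0 m) = 0 := by
    intro c b hcb hb
    have hev : ∀ s t : ℂ,
        pr (fun k => W k * Dm m (if k = c then s else if k = b then t else 1)) L * W L
          = pr W (c + 1) * Dm m s * pr (fun k => W (c + 1 + k)) (b - c) * Dm m t *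
              pr (fun k => W (b + 1 + k)) (L - b) := by
      intro s t
      have e2 := eval_two W c (b - c - 1) (L - b - 1) s t
      have h1 : c + 1 + (b - c - 1) = b := by omega
      rw [h1] at e2
      have h2tot : (c + 1) + ((b - c - 1 + 1) + (L - b - 1)) = L := by omega
      rw [h2tot] at e2
      have h3 : (fun k => W (c + 1 + (b - c - 1 + 1 + k))) = (fun k => W (b + 1 + k)) := by
        funext k
        have harg : c + 1 + (b - c - 1 + 1 + k) = b + 1 + k := by omega
        rw [harg]
      rw [h3] at e2
      have he : b - c - 1 + 1 = b - c := by omega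
      rw [he] at e2
      have hd2 : L - b - 1 + 1 = L - b := by omega
      rw [hd2] at e2
      exact e2
    have hkey : ∀ s t : ℂ, (s = 1 ∨ s = -1) → (t = 1 ∨ t = -1) →
        (pr W (c + 1) * Dm m s * pr (fun k => W (c + 1 + k)) (b - c) * Dm m t *
              pr (fun k => W (b + 1 + k)) (L - b)) (anc0 m) (anc0 m)
          = ∑ j : Fin L, lam j * (if (↑j : ℕ) = c then s else if (↑j : ℕ) = b then t else 1) := by
      intro s t hs ht
      have hk := key (fun k => if k = c then s else if k = b then t else 1) (fun k _ => by
        by_cases h1 : k = c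
        · simpa [h1] using hs
        · by_cases h2 : k = b
          · have hbc : ¬ (b = c) := by omega
            simpa [h1, h2, hbc] using ht
          · simp [h1, h2])
      rw [hev s t] at hk
      exact hk
    have h11 := hkey 1 1 (Or.inl rfl) (Or.inl rfl)
    have h1m := hkey 1 (-1) (Or.inl rfl) (Or.inr rfl)
    have hm1 := hkey (-1) 1 (Or.inr rfl) (Or.inl rfl)
    have hmm := hkey (-1) (-1) (Or.inr rfl) (Or.inr rfl)
    rw [quint] at h11 h1m hm1 hmm
    have hcomb :
        (∑ j : Fin L, lam j * (if (↑j : ℕ) = c then (1:ℂ) else if (↑j : ℕ) = b then 1 else 1))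
        - (∑ j : Fin L, lam j * (if (↑j : ℕ) = c then (1:ℂ) else if (↑j : ℕ) = b then -1 else 1))
        - (∑ j : Fin L, lam j * (if (↑j : ℕ) = c then (-1:ℂ) else if (↑j : ℕ) = b then 1 else 1))
        + (∑ j : Fin L, lam j * (if (↑j : ℕ) = c then (-1:ℂ) else if (↑j : ℕ) = b then -1 else 1))
        = 0 := by
      rw [← Finset.sum_sub_distrib, ← Finset.sum_sub_distrib, ← Finset.sum_add_distrib]
      apply Finset.sum_eq_zero
      intro j _
      by_cases h1 : (↑j : ℕ) = c
      · simp only [if_pos h1]; ring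
      · by_cases h2 : (↑j : ℕ) = b
        · simp only [if_neg h1, if_pos h2]; ring
        · simp only [if_neg h1, if_neg h2]; ring
    linear_combination (h11 - h1m - hm1 + hmm + hcomb) / 4
  -- middle brackets vanish
  have horth : ∀ (c b : ℕ), c < b → b < L →
      (pr (fun k => W (c + 1 + k)) (b - c)) (anc0 m) (anc0 m) = 0 := by
    intro c b hcb hb
    have h := hpair c b hcb hb
    have hX : (pr W (c + 1)) (anc0 m) (anc0 m) ≠ 0 := by
      intro h0
      exact hlam ⟨c, hcb.trans hb⟩ (by rw [← hR1 c (hcb.trans hb), h0, zero_mul])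
    have hY : (pr (fun k => W (b + 1 + k)) (L - b)) (anc0 m) (anc0 m) ≠ 0 := by
      intro h0
      exact hlam ⟨b, hb⟩ (by rw [← hR1 b hb, h0, mul_zero])
    rcases mul_eq_zero.mp h with h' | h'
    · rcases mul_eq_zero.mp h' with h'' | h''
      · exact absurd h'' hX
      · exact h''
    · exact absurd h' hY
  -- shifted prefix products are unitary
  have hPu : ∀ (c : ℕ), c < L →
      star (pr (fun k => W (k + 1)) c) * pr (fun k => W (k + 1)) c = 1 := by
    intro c hc
    have hm : pr (fun k => W (k + 1)) c ∈ Matrix.unitaryGroup (Fin (2 ^ m)) ℂ := by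
      apply pr_unitary
      intro k hk
      rw [hWV (k + 1) (by omega)]
      exact hV _
    exact (Unitary.mem_iff.mp hm).1
  have hsplit : ∀ (c b : ℕ), c ≤ b →
      pr (fun k => W (k + 1)) b
        = pr (fun k => W (k + 1)) c * pr (fun k => W (c + 1 + k)) (b - c) := by
    intro c b hcb
    have h : c + (b - c) = b := by omega
    have hadd := pr_add (fun k => W (k + 1)) c (b - c)
    rw [h] at hadd
    rw [hadd]
    congr 1
    apply pr_congr
    intro k _
    have harg : c + k + 1 = c + 1 + k := by omega
    rw [harg]
  have hdot : ∀ (c b : ℕ), c < L → b < L → c < b →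
      (star (pr (fun k => W (k + 1)) c) * pr (fun k => W (k + 1)) b) (anc0 m) (anc0 m) = 0 := by
    intro c b hc hb hcb
    rw [hsplit c b hcb.le, ← Matrix.mul_assoc, hPu c hc, Matrix.one_mul]
    exact horth c b hcb hb
  have hdiag : ∀ (c : ℕ), c < L →
      (star (pr (fun k => W (k + 1)) c) * pr (fun k => W (k + 1)) c) (anc0 m) (anc0 m) = 1 := by
    intro c hc
    rw [hPu c hc, Matrix.one_apply_eq]
  -- conclude via linear independence
  apply card_le_of_triangular
    (fun c i => (star (pr (fun k => W (k + 1)) (↑c : ℕ))) (anc0 m) i)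
    (fun b i => (pr (fun k => W (k + 1)) (↑b : ℕ)) i (anc0 m))
  · intro c
    rw [← Matrix.mul_apply]
    exact hdiag ↑c c.isLt
  · intro c b h
    rw [← Matrix.mul_apply]
    exact hdot ↑c ↑b c.isLt b.isLt h
end

section
/- Let θ(x) be the shifted sign function: θ(x) = 1 for x ≤ μ and θ(x) = 0 for x > μ. Suppose P is a function (e.g., a Laurent polynomial composed with e^{ix}) satisfying |P(x) − 1| ≤ γε/12 on [−1, μ−Δ/2] and |P(x)| ≤ γε/12 on [μ+Δ/2, 1]. Let H be a Hermitian matrix with spectrum in [−1, μ−Δ/2] ∪ [μ+Δ/2, 1], let |φ₀⟩ be a unit vector, and let |ψ₀⟩ be the (unit-norm) projection direction θ(H)|φ₀⟩ = ⟨ψ₀|φ₀⟩|ψ₀⟩ with |⟨ψ₀|φ₀⟩| ≥ γ > 0. Then ‖P(H)|φ₀⟩ − ⟨ψ₀|φ₀⟩|ψ₀⟩‖ ≤ γε/12, and the normalized state ψ = P(H)|φ₀⟩/‖P(H)|φ₀⟩‖ satisfies ‖ψ − e^{iα}ψ₀‖ ≤ ε/6 for a suitable phase α, hence |⟨ψ|O|ψ⟩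 − ⟨ψ₀|O|ψ₀⟩| ≤ ε‖O‖/2 for any Hermitian O. -/
open Matrix

/-- The operator (spectral) norm of a complex matrix, via its action on Euclidean space. -/
noncomputable def opNorm {ι : Type*} [Fintype ι] [DecidableEq ι]
    (A : Matrix ι ι ℂ) : ℝ :=
  ‖Matrix.toEuclideanCLM (𝕜 := ℂ) A‖

/-- Applying a scalar function `g` to a Hermitian matrix `H` via its spectral
decomposition: `g(H) = U · diag(g(λᵢ)) · U†`. -/
noncomputable def matFun {n : ℕ} {H : Matrix (Fin n) (Fin n) ℂ}
    (hH : H.IsHermitian) (g : ℝ → ℂ) : Matrix (Fin n) (Fin n) ℂ :=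
  (hH.eigenvectorUnitary : Matrix (Fin n) (Fin n) ℂ) *
    Matrix.diagonal (fun i => g (hH.eigenvalues i)) *
    (hH.eigenvectorUnitary : Matrix (Fin n) (Fin n) ℂ)ᴴ

namespace Aux19

variable {n : ℕ}

lemma norm_unitary_apply (U : Matrix (Fin n) (Fin n) ℂ)
    (hU : U ∈ Matrix.unitaryGroup (Fin n) ℂ) (x : EuclideanSpace ℂ (Fin n)) :
    ‖Matrix.toEuclideanCLM (𝕜 := ℂ) U x‖ = ‖x‖ := by
  apply ContinuousLinearMap.norm_map_of_mem_unitary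
  rw [Unitary.mem_iff] at hU ⊢
  constructor
  · rw [← map_star, ← _root_.map_mul, hU.1, _root_.map_one]
  · rw [← map_star, ← _root_.map_mul, hU.2, _root_.map_one]

lemma toEuclideanCLM_apply_coord (A : Matrix (Fin n) (Fin n) ℂ)
    (x : EuclideanSpace ℂ (Fin n)) (i : Fin n) :
    (Matrix.toEuclideanCLM (𝕜 := ℂ) A x) i = A.mulVec (fun j => x j) i := by
  have h := Matrix.ofLp_toEuclideanCLM (𝕜 := ℂ) A x
  exact congrFun h i

lemma norm_diagonal_apply_le (d : Fin n → ℂ) (M : ℝ) (hM0 : 0 ≤ M)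
    (hM : ∀ i, ‖d i‖ ≤ M) (x : EuclideanSpace ℂ (Fin n)) :
    ‖Matrix.toEuclideanCLM (𝕜 := ℂ) (Matrix.diagonal d) x‖ ≤ M * ‖x‖ := by
  rw [EuclideanSpace.norm_eq, EuclideanSpace.norm_eq]
  rw [show M * Real.sqrt (∑ i, ‖x i‖ ^ 2) = Real.sqrt (M ^ 2 * ∑ i, ‖x i‖ ^ 2) by
    rw [Real.sqrt_mul (by positivity), Real.sqrt_sq hM0]]
  apply Real.sqrt_le_sqrt
  rw [Finset.mul_sum]
  apply Finset.sum_le_sum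
  intro i _
  rw [toEuclideanCLM_apply_coord, Matrix.mulVec_diagonal]
  rw [norm_mul, mul_pow]
  gcongr
  exact hM i

lemma norm_matFun_apply_le {H : Matrix (Fin n) (Fin n) ℂ} (hH : H.IsHermitian)
    (g : ℝ → ℂ) (M : ℝ) (hM0 : 0 ≤ M) (hM : ∀ i, ‖g (hH.eigenvalues i)‖ ≤ M)
    (x : EuclideanSpace ℂ (Fin n)) :
    ‖Matrix.toEuclideanCLM (𝕜 := ℂ) (matFun hH g) x‖ ≤ M * ‖x‖ := by
  unfold matFun
  rw [← Matrix.star_eq_conjTranspose, _root_.map_mul, _root_.map_mul,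
    ContinuousLinearMap.mul_apply, ContinuousLinearMap.mul_apply]
  have hUmem := hH.eigenvectorUnitary.property
  rw [norm_unitary_apply _ hUmem]
  calc ‖Matrix.toEuclideanCLM (𝕜 := ℂ) (Matrix.diagonal fun i => g (hH.eigenvalues i))
        (Matrix.toEuclideanCLM (𝕜 := ℂ) (star (hH.eigenvectorUnitary :
          Matrix (Fin n) (Fin n) ℂ)) x)‖
      ≤ M * ‖Matrix.toEuclideanCLM (𝕜 := ℂ) (star (hH.eigenvectorUnitary :
          Matrix (Fin n) (Fin n) ℂ)) x‖ := norm_diagonal_apply_le _ M hM0 hM _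
    _ = M * ‖x‖ := by
        rw [norm_unitary_apply _ (Unitary.star_mem hUmem)]

lemma matFun_sub {H : Matrix (Fin n) (Fin n) ℂ} (hH : H.IsHermitian)
    (g₁ g₂ : ℝ → ℂ) :
    matFun hH g₁ - matFun hH g₂ = matFun hH (fun x => g₁ x - g₂ x) := by
  unfold matFun
  rw [← Matrix.sub_mul, ← Matrix.mul_sub, Matrix.diagonal_sub]

lemma normalize_sub {E : Type*} [NormedAddCommGroup E] [NormedSpace ℝ E]
    (v w : E) (hv : v ≠ 0) (hw : w ≠ 0) :
    ‖‖v‖⁻¹ • v - ‖w‖⁻¹ • w‖ ≤ 2 * ‖v - w‖ / ‖w‖ := by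
  have hvn : (0:ℝ) < ‖v‖ := norm_pos_iff.mpr hv
  have hwn : (0:ℝ) < ‖w‖ := norm_pos_iff.mpr hw
  have h1 : ‖‖v‖⁻¹ • v - ‖w‖⁻¹ • v‖ = |‖w‖ - ‖v‖| / ‖w‖ := by
    rw [← sub_smul, norm_smul, Real.norm_eq_abs]
    calc |‖v‖⁻¹ - ‖w‖⁻¹| * ‖v‖ = |(‖v‖⁻¹ - ‖w‖⁻¹) * ‖v‖| := by
          rw [abs_mul, abs_of_pos hvn]
      _ = |(‖w‖ - ‖v‖) / ‖w‖| := by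
          congr 1
          field_simp
      _ = |‖w‖ - ‖v‖| / ‖w‖ := by rw [abs_div, abs_of_pos hwn]
  have h2 : ‖‖w‖⁻¹ • v - ‖w‖⁻¹ • w‖ = ‖v - w‖ / ‖w‖ := by
    rw [← smul_sub, norm_smul, Real.norm_eq_abs, abs_of_pos (by positivity)]
    rw [inv_mul_eq_div]
  calc ‖‖v‖⁻¹ • v - ‖w‖⁻¹ • w‖
      ≤ ‖‖v‖⁻¹ • v - ‖w‖⁻¹ • v‖ + ‖‖w‖⁻¹ • v - ‖w‖⁻¹ • w‖ := by
        have := norm_sub_le_norm_sub_add_norm_sub (‖v‖⁻¹ • v) (‖w‖⁻¹ • v) (‖w‖⁻¹ • w)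
        exact this
    _ = |‖w‖ - ‖v‖| / ‖w‖ + ‖v - w‖ / ‖w‖ := by rw [h1, h2]
    _ ≤ ‖v - w‖ / ‖w‖ + ‖v - w‖ / ‖w‖ := by
        gcongr
        rw [abs_sub_comm]
        exact abs_norm_sub_norm_le v w
    _ = 2 * ‖v - w‖ / ‖w‖ := by ring


lemma abstract23 {E : Type*} [NormedAddCommGroup E] [InnerProductSpace ℂ E]
    (v ψ₀ : E) (c : ℂ) (γ ε : ℝ) (hγ : 0 < γ) (hε0 : 0 < ε) (hε1 : ε < 1)
    (hψ₀ : ‖ψ₀‖ = 1) (hcγ : γ ≤ ‖c‖) (key : ‖v - c • ψ₀‖ ≤ γ * ε / 12) :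
    (∃ α : ℝ, ‖(‖v‖⁻¹ • v) - Complex.exp ((α : ℂ) * Complex.I) • ψ₀‖ ≤ ε / 6) ∧
    ∀ T : E →L[ℂ] E,
      ‖(inner ℂ (‖v‖⁻¹ • v) (T (‖v‖⁻¹ • v)) : ℂ) - (inner ℂ ψ₀ (T ψ₀) : ℂ)‖
        ≤ ε * ‖T‖ / 2 := by
  set δ : ℝ := γ * ε / 12 with hδ
  have hδ0 : 0 < δ := by positivity
  have hψ0ne : ψ₀ ≠ 0 := by
    intro h; rw [h, norm_zero] at hψ₀; norm_num at hψ₀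
  have hc0 : c ≠ 0 := by
    intro h; rw [h, norm_zero] at hcγ; linarith
  have hcnorm : ‖c • ψ₀‖ = ‖c‖ := by rw [norm_smul, hψ₀, mul_one]
  have hγδ : 0 < γ - δ := by nlinarith
  have hvlow : γ - δ ≤ ‖v‖ := by
    have h := abs_norm_sub_norm_le v (c • ψ₀)
    rw [hcnorm] at h
    have h' := abs_le.mp (le_trans h key)
    linarith [h'.1]
  have hvpos : 0 < ‖v‖ := lt_of_lt_of_le hγδ hvlow
  have hv0 : v ≠ 0 := by
    intro h; rw [h, norm_zero] at hvpos; linarith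
  have hw0 : c • ψ₀ ≠ 0 := smul_ne_zero hc0 hψ0ne
  set e : ℂ := Complex.exp ((c.arg : ℂ) * Complex.I) with he
  have habs : ‖c‖ = ‖c‖ := rfl
  have hcne : ((‖c‖ : ℝ) : ℂ) ≠ 0 := by
    simp only [ne_eq, Complex.ofReal_eq_zero]
    intro h0; rw [h0] at hcγ; linarith
  have hexp : e = (‖c‖ : ℂ)⁻¹ * c := by
    have h := Complex.norm_mul_exp_arg_mul_I c
    rw [habs] at h
    rw [he, eq_inv_mul_iff_mul_eq₀ hcne]
    exact h
  have hphase : ‖c • ψ₀‖⁻¹ • (c • ψ₀) = e • ψ₀ := by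
    rw [hcnorm, hexp, mul_smul, ← Complex.ofReal_inv]
    exact (algebraMap_smul ℂ (‖c‖⁻¹ : ℝ) (c • ψ₀)).symm
  have hmain : ‖‖v‖⁻¹ • v - e • ψ₀‖ ≤ ε / 6 := by
    rw [← hphase]
    calc ‖‖v‖⁻¹ • v - ‖c • ψ₀‖⁻¹ • (c • ψ₀)‖
        ≤ 2 * ‖v - c • ψ₀‖ / ‖c • ψ₀‖ := normalize_sub v (c • ψ₀) hv0 hw0
      _ ≤ 2 * δ / γ := by
          rw [hcnorm]
          exact div_le_div₀ (by positivity) (by linarith) hγ hcγ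
      _ = ε / 6 := by rw [hδ]; field_simp; ring
  refine ⟨⟨c.arg, hmain⟩, ?_⟩
  intro T
  set u : E := ‖v‖⁻¹ • v with hu
  set w : E := e • ψ₀ with hwdef
  have hu1 : ‖u‖ = 1 := by
    rw [hu, norm_smul, Real.norm_eq_abs, abs_of_pos (inv_pos.mpr hvpos),
      inv_mul_cancel₀ hvpos.ne']
  have he1 : ‖e‖ = 1 := Complex.norm_exp_ofReal_mul_I _
  have hw1 : ‖w‖ = 1 := by
    rw [hwdef, norm_smul, he1, hψ₀, mul_one]
  have hee : (starRingEnd ℂ) e * e = 1 := by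
    rw [mul_comm, Complex.mul_conj, Complex.normSq_eq_norm_sq, he1]; norm_num
  have hinv : (inner ℂ w (T w) : ℂ) = inner ℂ ψ₀ (T ψ₀) := by
    rw [hwdef, _root_.map_smul, inner_smul_left, inner_smul_right, ← mul_assoc,
      hee, one_mul]
  have hsplit : (inner ℂ u (T u) : ℂ) - inner ℂ w (T w)
      = inner ℂ (u - w) (T u) + inner ℂ w (T (u - w)) := by
    rw [inner_sub_left, _root_.map_sub, inner_sub_right]
    ring
  have huw : ‖u - w‖ ≤ ε / 6 := hmain
  calc ‖(inner ℂ u (T u) : ℂ) - inner ℂ ψ₀ (T ψ₀)‖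
      = ‖(inner ℂ u (T u) : ℂ) - inner ℂ w (T w)‖ := by rw [hinv]
    _ ≤ ‖(inner ℂ (u - w) (T u) : ℂ)‖ + ‖(inner ℂ w (T (u - w)) : ℂ)‖ := by
        rw [hsplit]; exact norm_add_le _ _
    _ ≤ ‖u - w‖ * ‖T u‖ + ‖w‖ * ‖T (u - w)‖ := by
        gcongr <;> exact norm_inner_le_norm _ _
    _ ≤ (ε / 6) * (‖T‖ * ‖u‖) + 1 * (‖T‖ * ‖u - w‖) := by
        gcongr
        · exact T.le_opNorm u
        · exact hw1.le
        · exact T.le_opNorm _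
    _ ≤ (ε / 6) * (‖T‖ * 1) + 1 * (‖T‖ * (ε / 6)) := by
        rw [hu1]
        gcongr
    _ ≤ ε * ‖T‖ / 2 := by nlinarith [norm_nonneg T, hε0.le]

end Aux19

set_option maxHeartbeats 1000000 in
/-- Ground state projection via an approximate shifted sign function.
`H` is Hermitian with spectrum in `[−1, μ−Δ/2] ∪ [μ+Δ/2, 1]`; the function `P`
satisfies `|P − 1| ≤ γε/12` on `[−1, μ−Δ/2]` and `|P| ≤ γε/12` on `[μ+Δ/2, 1]`;
`θ(H)|φ₀⟩ = ⟨ψ₀|φ₀⟩|ψ₀⟩` with `|⟨ψ₀|φ₀⟩| ≥ γ > 0` (here `θ(x) = 1` for `x ≤ μ`, else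
`0`).  Then `‖P(H)|φ₀⟩ − ⟨ψ₀|φ₀⟩|ψ₀⟩‖ ≤ γε/12`; the normalized state
`ψ = P(H)φ₀/‖P(H)φ₀‖` satisfies `‖ψ − e^{iα}ψ₀‖ ≤ ε/6` for a suitable phase `α`; and
`|⟨ψ|O|ψ⟩ − ⟨ψ₀|O|ψ₀⟩| ≤ ε‖O‖/2` for every Hermitian `O`. -/
theorem stmt19 {n : ℕ} (H : Matrix (Fin n) (Fin n) ℂ) (hH : H.IsHermitian)
    (μ Δ γ ε : ℝ) (hΔ : 0 < Δ) (hγ : 0 < γ) (hε : ε ∈ Set.Ioo (0 : ℝ) 1)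
    (hspec : ∀ i, hH.eigenvalues i ∈
      Set.Icc (-1 : ℝ) (μ - Δ / 2) ∪ Set.Icc (μ + Δ / 2) 1)
    (P : ℝ → ℂ)
    (hP1 : ∀ x ∈ Set.Icc (-1 : ℝ) (μ - Δ / 2), ‖P x - 1‖ ≤ γ * ε / 12)
    (hP2 : ∀ x ∈ Set.Icc (μ + Δ / 2) (1 : ℝ), ‖P x‖ ≤ γ * ε / 12)
    (φ₀ ψ₀ : EuclideanSpace ℂ (Fin n)) (hφ₀ : ‖φ₀‖ = 1) (hψ₀ : ‖ψ₀‖ = 1)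
    (hproj : Matrix.toEuclideanCLM (𝕜 := ℂ)
        (matFun hH (fun x => if x ≤ μ then 1 else 0)) φ₀ =
      (inner ℂ ψ₀ φ₀ : ℂ) • ψ₀)
    (hover : γ ≤ ‖(inner ℂ ψ₀ φ₀ : ℂ)‖) :
    ‖Matrix.toEuclideanCLM (𝕜 := ℂ) (matFun hH P) φ₀ - (inner ℂ ψ₀ φ₀ : ℂ) • ψ₀‖ ≤
        γ * ε / 12 ∧
      (∃ α : ℝ,
        ‖(‖Matrix.toEuclideanCLM (𝕜 := ℂ) (matFun hH P) φ₀‖⁻¹ •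
            Matrix.toEuclideanCLM (𝕜 := ℂ) (matFun hH P) φ₀ : EuclideanSpace ℂ (Fin n)) -
          Complex.exp ((α : ℂ) * Complex.I) • ψ₀‖ ≤ ε / 6) ∧
      ∀ O : Matrix (Fin n) (Fin n) ℂ, O.IsHermitian →
        ‖(inner ℂ
              (‖Matrix.toEuclideanCLM (𝕜 := ℂ) (matFun hH P) φ₀‖⁻¹ •
                Matrix.toEuclideanCLM (𝕜 := ℂ) (matFun hH P) φ₀ :
                  EuclideanSpace ℂ (Fin n))
              (Matrix.toEuclideanCLM (𝕜 := ℂ) O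
                (‖Matrix.toEuclideanCLM (𝕜 := ℂ) (matFun hH P) φ₀‖⁻¹ •
                  Matrix.toEuclideanCLM (𝕜 := ℂ) (matFun hH P) φ₀)) : ℂ) -
            (inner ℂ ψ₀ (Matrix.toEuclideanCLM (𝕜 := ℂ) O ψ₀) : ℂ)‖ ≤
          ε * opNorm O / 2 := by
  obtain ⟨hε0, hε1⟩ := hε
  have hδ0 : (0:ℝ) < γ * ε / 12 := by positivity
  have hbound : ∀ i, ‖P (hH.eigenvalues i) -
      (if hH.eigenvalues i ≤ μ then (1:ℂ) else 0)‖ ≤ γ * ε / 12 := by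
    intro i
    rcases hspec i with h | h
    · have hle : hH.eigenvalues i ≤ μ := le_trans h.2 (by linarith)
      rw [if_pos hle]
      exact hP1 _ h
    · have hle : ¬ hH.eigenvalues i ≤ μ := by
        have := h.1; push_neg; linarith
      rw [if_neg hle, sub_zero]
      exact hP2 _ h
  have key : ‖Matrix.toEuclideanCLM (𝕜 := ℂ) (matFun hH P) φ₀ -
      (inner ℂ ψ₀ φ₀ : ℂ) • ψ₀‖ ≤ γ * ε / 12 := by
    rw [← hproj]
    have hrw : Matrix.toEuclideanCLM (𝕜 := ℂ) (matFun hH P) φ₀ -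
        Matrix.toEuclideanCLM (𝕜 := ℂ)
          (matFun hH (fun x => if x ≤ μ then 1 else 0)) φ₀
        = Matrix.toEuclideanCLM (𝕜 := ℂ)
            (matFun hH (fun x => P x - (if x ≤ μ then 1 else 0))) φ₀ := by
      rw [← Aux19.matFun_sub, _root_.map_sub, ContinuousLinearMap.sub_apply]
    rw [hrw]
    have h := Aux19.norm_matFun_apply_le hH
      (fun x => P x - (if x ≤ μ then 1 else 0)) (γ * ε / 12) hδ0.le hbound φ₀
    rwa [hφ₀, mul_one] at h
  obtain ⟨h2, h3⟩ := Aux19.abstract23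
    (Matrix.toEuclideanCLM (𝕜 := ℂ) (matFun hH P) φ₀) ψ₀ (inner ℂ ψ₀ φ₀ : ℂ)
    γ ε hγ hε0 hε1 hψ₀ hover key
  exact ⟨key, h2, fun O _ => h3 (Matrix.toEuclideanCLM (𝕜 := ℂ) O)⟩
end
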